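/- arXiv:1705.01117 — 2 statements merged into one kernel-verified Lean document; each statement's English description precedes it below -/
import Mathlib

section
/- Let (C,∂) be a finitely generated free chain complex over R = F₂[U,V,U⁻¹,V⁻¹] with basis B, and write the differential as ∂ = Σ_{n∈ℤ} Pₙ·Uⁿ where each Pₙ is a matrix (in the basis B) with entries in F₂[V,V⁻¹]. Define H_B = Σ_{n∈ℤ} (n(n−1)/2 mod 2)·Pₙ·U^{n−2}. Then (Φ_B)² = ∂ ∘ H_B + H_B ∘ ∂, where Φ_B is the formal derivative of ∂ with respect to U. In particular (Φ_B)² is R-equivariantly chain homotopic to zero. -/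
open Finsupp

noncomputable section

abbrev F2 : Type := ZMod 2

/-- The Laurent polynomial ring `F₂[U,V,U⁻¹,V⁻¹]`, realized as the monoid algebra
of `ℤ × ℤ` over `F₂`; `U` corresponds to `(1,0)` and `V` to `(0,1)`. -/
abbrev R2 : Type := AddMonoidAlgebra F2 (ℤ × ℤ)

/-- Formal derivative of a Laurent polynomial with respect to `U`. -/
def dU (f : R2) : R2 :=
  Finsupp.sum f.coeff fun mn c => AddMonoidAlgebra.single (mn.1 - 1, mn.2) ((mn.1 : F2) * c)

/-- Formal derivative of a Laurent polynomial with respect to `V`. -/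
def dV (f : R2) : R2 :=
  Finsupp.sum f.coeff fun mn c => AddMonoidAlgebra.single (mn.1, mn.2 - 1) ((mn.2 : F2) * c)

/-- The `R2`-linear map `(B →₀ R2) →ₗ (B' →₀ R2)` determined by its values on
the standard basis. -/
def bmap {B B' : Type} (v : B → (B' →₀ R2)) : (B →₀ R2) →ₗ[R2] (B' →₀ R2) :=
  Finsupp.lsum R2 fun x => LinearMap.toSpanSingleton R2 _ (v x)

/-- The matrix entry `P_{x y}` of a linear map with respect to the standard bases. -/
def matOf {B B' : Type} (f : (B →₀ R2) →ₗ[R2] (B' →₀ R2)) (x : B) (y : B') : R2 :=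
  f (Finsupp.single x 1) y

/-- Apply `g : R2 → R2` to each matrix entry of `f`. -/
def entrywise {B B' : Type} [Finite B'] (g : R2 → R2)
    (f : (B →₀ R2) →ₗ[R2] (B' →₀ R2)) : (B →₀ R2) →ₗ[R2] (B' →₀ R2) :=
  bmap fun x => Finsupp.equivFunOnFinite.symm fun y => g (matOf f x y)

/-- `Φ_B`, the formal derivative of the differential with respect to `U`. -/
def PhiB {B : Type} [Finite B] (d : (B →₀ R2) →ₗ[R2] (B →₀ R2)) :
    (B →₀ R2) →ₗ[R2] (B →₀ R2) :=
  entrywise dU d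

/-- `Ψ_B`, the formal derivative of the differential with respect to `V`. -/
def PsiB {B : Type} [Finite B] (d : (B →₀ R2) →ₗ[R2] (B →₀ R2)) :
    (B →₀ R2) →ₗ[R2] (B →₀ R2) :=
  entrywise dV d
/-- The operation on Laurent polynomials sending `Σₙ pₙ(V) Uⁿ` to
`Σₙ (n(n-1)/2 mod 2) pₙ(V) U^(n-2)`, used to define the homotopy `H_B`. -/
def hUU (f : R2) : R2 :=
  Finsupp.sum f.coeff fun mn c =>
    AddMonoidAlgebra.single (mn.1 - 2, mn.2) (((mn.1 * (mn.1 - 1) / 2 : ℤ) : F2) * c)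


-- ======== auxiliary lemmas ========

lemma dU_zero : dU 0 = 0 := by simp [dU]
lemma hUU_zero : hUU 0 = 0 := by simp [hUU]
lemma dU_add (f g : R2) : dU (f + g) = dU f + dU g := by
  unfold dU; rw [AddMonoidAlgebra.coeff_add, Finsupp.sum_add_index] <;> simp [mul_add, AddMonoidAlgebra.single_add]
lemma hUU_add (f g : R2) : hUU (f + g) = hUU f + hUU g := by
  unfold hUU; rw [AddMonoidAlgebra.coeff_add, Finsupp.sum_add_index] <;> simp [mul_add, AddMonoidAlgebra.single_add]
lemma dU_single (mn : ℤ × ℤ) (c : F2) :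
    dU (AddMonoidAlgebra.single mn c) = AddMonoidAlgebra.single (mn.1 - 1, mn.2) ((mn.1 : F2) * c) := by
  unfold dU; rw [AddMonoidAlgebra.coeff_single, Finsupp.sum_single_index]; simp
lemma hUU_single (mn : ℤ × ℤ) (c : F2) :
    hUU (AddMonoidAlgebra.single mn c)
      = AddMonoidAlgebra.single (mn.1 - 2, mn.2) (((mn.1 * (mn.1 - 1) / 2 : ℤ) : F2) * c) := by
  unfold hUU; rw [AddMonoidAlgebra.coeff_single, Finsupp.sum_single_index]; simp

lemma dU_dU (f : R2) : dU (dU f) = 0 := by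
  induction f using AddMonoidAlgebra.induction_linear with
  | zero => simp [dU_zero]
  | add f g hf hg => rw [dU_add, dU_add, hf, hg, add_zero]
  | single a c =>
    rw [dU_single, dU_single]
    have h2 : ((a.1 - 1 : ℤ) : F2) * ((a.1 : F2) * c) = 0 := by
      have : (((a.1 - 1) * a.1 : ℤ) : F2) = 0 := by
        rw [ZMod.intCast_zmod_eq_zero_iff_dvd]
        exact (Int.even_mul_succ_self (a.1 - 1)).two_dvd.trans (by simp)
      push_cast at this ⊢
      rw [← mul_assoc, this, zero_mul]
    rw [h2, AddMonoidAlgebra.single_zero]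

lemma t_add (m p : ℤ) :
    (m + p) * ((m + p) - 1) / 2 = m * (m - 1) / 2 + p * (p - 1) / 2 + m * p := by
  have e : ∀ n : ℤ, (2:ℤ) ∣ n * (n - 1) := by
    intro n
    have := (Int.even_mul_succ_self (n - 1)).two_dvd
    simpa [sub_add_cancel, mul_comm] using this
  apply mul_left_cancel₀ (a := (2:ℤ)) two_ne_zero
  rw [mul_add, mul_add, Int.mul_ediv_cancel' (e (m+p)), Int.mul_ediv_cancel' (e m),
    Int.mul_ediv_cancel' (e p)]
  ring

lemma dU_mul (f g : R2) : dU (f * g) = dU f * g + f * dU g := by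
  induction f using AddMonoidAlgebra.induction_linear with
  | zero => simp [dU_zero]
  | add f1 f2 h1 h2 => rw [add_mul, dU_add, h1, h2, dU_add]; ring
  | single a c =>
    induction g using AddMonoidAlgebra.induction_linear with
    | zero => simp [dU_zero]
    | add g1 g2 h1 h2 => rw [mul_add, dU_add, h1, h2, dU_add]; ring
    | single b d =>
      rw [AddMonoidAlgebra.single_mul_single, dU_single, dU_single, dU_single,
        AddMonoidAlgebra.single_mul_single, AddMonoidAlgebra.single_mul_single]
      have i1 : ((a.1 - 1, a.2) + b : ℤ × ℤ) = ((a + b).1 - 1, (a + b).2) := by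
        simp [Prod.ext_iff]; ring
      have i2 : (a + (b.1 - 1, b.2) : ℤ × ℤ) = ((a + b).1 - 1, (a + b).2) := by
        simp [Prod.ext_iff]; ring
      rw [i1, i2, ← AddMonoidAlgebra.single_add]
      congr 1
      simp only [Prod.fst_add]
      push_cast
      ring

lemma hUU_mul (f g : R2) : hUU (f * g) = hUU f * g + f * hUU g + dU f * dU g := by
  induction f using AddMonoidAlgebra.induction_linear with
  | zero => simp [hUU_zero, dU_zero]
  | add f1 f2 h1 h2 =>
    rw [add_mul, hUU_add, h1, h2, hUU_add, dU_add]; ring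
  | single a c =>
    induction g using AddMonoidAlgebra.induction_linear with
    | zero => simp [hUU_zero, dU_zero]
    | add g1 g2 h1 h2 =>
      rw [mul_add, hUU_add, h1, h2, hUU_add, dU_add]; ring
    | single b d =>
      rw [AddMonoidAlgebra.single_mul_single, hUU_single, hUU_single, hUU_single,
        dU_single, dU_single, AddMonoidAlgebra.single_mul_single,
        AddMonoidAlgebra.single_mul_single, AddMonoidAlgebra.single_mul_single]
      have i1 : ((a.1 - 2, a.2) + b : ℤ × ℤ) = ((a + b).1 - 2, (a + b).2) := by
        simp [Prod.ext_iff]; ring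
      have i2 : (a + (b.1 - 2, b.2) : ℤ × ℤ) = ((a + b).1 - 2, (a + b).2) := by
        simp [Prod.ext_iff]; ring
      have i3 : ((a.1 - 1, a.2) + (b.1 - 1, b.2) : ℤ × ℤ) = ((a + b).1 - 2, (a + b).2) := by
        simp [Prod.ext_iff]; ring
      rw [i1, i2, i3, ← AddMonoidAlgebra.single_add, ← AddMonoidAlgebra.single_add]
      congr 1
      simp only [Prod.fst_add]
      rw [t_add a.1 b.1]
      push_cast
      ring

lemma matOf_ext {B B' : Type} {f g : (B →₀ R2) →ₗ[R2] (B' →₀ R2)}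
    (h : ∀ x y, matOf f x y = matOf g x y) : f = g := by
  refine Finsupp.lhom_ext' fun a => LinearMap.ext fun b => ?_
  have hb : (Finsupp.single a b : B →₀ R2) = b • Finsupp.single a 1 := by
    rw [Finsupp.smul_single, smul_eq_mul, mul_one]
  simp only [LinearMap.comp_apply, Finsupp.lsingle_apply, hb, map_smul]
  congr 1
  exact Finsupp.ext fun y => h a y

lemma apply_eq {B B' : Type} [Fintype B] (f : (B →₀ R2) →ₗ[R2] (B' →₀ R2))
    (p : B →₀ R2) (y : B') : f p y = ∑ z, p z * matOf f z y := by
  induction p using Finsupp.induction_linear with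
  | zero => simp
  | add p q hp hq =>
    simp [map_add, Finsupp.add_apply, hp, hq, add_mul, Finset.sum_add_distrib]
  | single a c =>
    classical
    rw [Finset.sum_eq_single a (fun b _ hb => by
      rw [Finsupp.single_apply, if_neg (Ne.symm hb), zero_mul])
      (fun h => absurd (Finset.mem_univ a) h)]
    have hb : (Finsupp.single a c : B →₀ R2) = c • Finsupp.single a 1 := by
      rw [Finsupp.smul_single, smul_eq_mul, mul_one]
    rw [Finsupp.single_apply, if_pos rfl]
    conv_lhs => rw [hb, map_smul]
    rfl

lemma matOf_comp {B : Type} [Fintype B] (f g : (B →₀ R2) →ₗ[R2] (B →₀ R2)) (x y : B) :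
    matOf (f ∘ₗ g) x y = ∑ z, matOf g x z * matOf f z y := by
  simp only [matOf, LinearMap.comp_apply]
  exact apply_eq f _ y

lemma matOf_entrywise {B B' : Type} [Fintype B'] (g : R2 → R2)
    (f : (B →₀ R2) →ₗ[R2] (B' →₀ R2)) (x : B) (y : B') :
    matOf (entrywise g f) x y = g (matOf f x y) := by
  simp only [matOf, entrywise, bmap]
  rw [Finsupp.lsum_apply, Finsupp.sum_single_index (by simp)]
  simp [LinearMap.toSpanSingleton_apply]

lemma matOf_add {B B' : Type} (f g : (B →₀ R2) →ₗ[R2] (B' →₀ R2)) (x : B) (y : B') :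
    matOf (f + g) x y = matOf f x y + matOf g x y := rfl

lemma R2.add_self (a : R2) : a + a = 0 := by
  ext mn
  simp only [AddMonoidAlgebra.coeff_add, AddMonoidAlgebra.coeff_zero, Finsupp.add_apply, Finsupp.coe_zero, Pi.zero_apply]
  exact CharTwo.add_self_eq_zero _

lemma R2.eq_of_add_eq_zero {a b : R2} (h : a + b = 0) : a = b := by
  have := congrArg (· + b) h
  simpa [add_assoc, R2.add_self b] using this


/-- writing `∂ = Σₙ Pₙ Uⁿ` and setting
`H_B = Σₙ (n(n-1)/2 mod 2) Pₙ U^(n-2)` (the entrywise operation `hUU` applied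
to the matrix of `∂`), one has `(Φ_B)² = ∂ ∘ H_B + H_B ∘ ∂`; in particular
`(Φ_B)²` is `R`-equivariantly chain homotopic to zero. -/
theorem stmt3 {B : Type} [Fintype B]
    (d : (B →₀ R2) →ₗ[R2] (B →₀ R2)) (hd : d ∘ₗ d = 0) :
    PhiB d ∘ₗ PhiB d = d ∘ₗ entrywise hUU d + entrywise hUU d ∘ₗ d ∧
    ∃ H : (B →₀ R2) →ₗ[R2] (B →₀ R2),
      PhiB d ∘ₗ PhiB d = d ∘ₗ H + H ∘ₗ d := by
  have main : PhiB d ∘ₗ PhiB d = d ∘ₗ entrywise hUU d + entrywise hUU d ∘ₗ d := by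
    apply matOf_ext
    intro x y
    have hP : (∑ z, matOf d x z * matOf d z y) = 0 := by
      rw [← matOf_comp d d x y, hd]; rfl
    rw [matOf_comp, matOf_add, matOf_comp, matOf_comp]
    simp only [PhiB, matOf_entrywise]
    apply R2.eq_of_add_eq_zero
    have h0 : hUU (∑ z, matOf d x z * matOf d z y) = 0 := by rw [hP, hUU_zero]
    rw [show hUU = ⇑(AddMonoidHom.mk' hUU hUU_add) from rfl, map_sum] at h0
    simp only [AddMonoidHom.mk'_apply, hUU_mul] at h0
    rw [Finset.sum_add_distrib, Finset.sum_add_distrib] at h0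
    linear_combination h0
  exact ⟨main, entrywise hUU d, main⟩

end
end

section
/- Let C₁, C₁', C₂ be chain complexes over F₂ with chain maps ι₁, Φ₁, Ψ₁ on C₁; ι₁', Φ₁', Ψ₁' on C₁'; and ι₂, Φ₂, Ψ₂ on C₂. Suppose F : C₁ → C₁' is a chain map with F∘ι₁ ≃ ι₁'∘F, F∘Φ₁ ≃ Φ₁'∘F, and that the needed commutation relations hold up to homotopy. Then F⊗id : C₁⊗C₂ → C₁'⊗C₂ intertwines the product involutions up to chain homotopy: (F⊗id)∘(ι₁⊗ι₂ + Φ₁ι₁⊗Ψ₂ι₂) ≃ (ι₁'⊗ι₂ + Φ₁'ι₁'⊗Ψ₂ι₂)∘(F⊗id). -/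
open TensorProduct

noncomputable section

/-- Chain homotopy (over `F₂`) for maps between two chain complexes:
`f ≃ g` iff `f + g = d₂ ∘ H + H ∘ d₁` for some `F₂`-linear `H`. -/
def Htp2 {C C' : Type} [AddCommGroup C] [Module F2 C]
    [AddCommGroup C'] [Module F2 C']
    (d : C →ₗ[F2] C) (d' : C' →ₗ[F2] C') (f g : C →ₗ[F2] C') : Prop :=
  ∃ H : C →ₗ[F2] C', f + g = d' ∘ₗ H + H ∘ₗ d

/-- Chain homotopy of endomorphisms of a single complex. -/
def Htp {C : Type} [AddCommGroup C] [Module F2 C]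
    (d f g : C →ₗ[F2] C) : Prop :=
  Htp2 d d f g

/-- `f ⊗ id + id ⊗ g` on the tensor product of two complexes over `F₂`; applied
to the differentials it is the tensor-product differential. -/
def tD {C₁ C₂ : Type} [AddCommGroup C₁] [Module F2 C₁]
    [AddCommGroup C₂] [Module F2 C₂]
    (f : C₁ →ₗ[F2] C₁) (g : C₂ →ₗ[F2] C₂) :
    C₁ ⊗[F2] C₂ →ₗ[F2] C₁ ⊗[F2] C₂ :=
  TensorProduct.map f LinearMap.id + TensorProduct.map LinearMap.id g

lemma char2_addself {M : Type*} [AddCommGroup M] [Module F2 M] (x : M) :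
    x + x = 0 := by
  have h : (2 : F2) • x = 0 := by
    have : (2 : F2) = 0 := rfl
    simp [this]
  rwa [two_smul] at h

lemma cancel_middle {M : Type*} [AddCommGroup M] [Module F2 M] (a b c : M) :
    a + c + (c + b) = a + b := by
  have h : a + c + (c + b) = a + (c + c) + b := by abel
  rw [h, char2_addself, add_zero]

lemma key_htp {C₁ C₁' C₂ : Type} [AddCommGroup C₁] [Module F2 C₁]
    [AddCommGroup C₁'] [Module F2 C₁'] [AddCommGroup C₂] [Module F2 C₂]
    (d₁ : C₁ →ₗ[F2] C₁) (d₁' : C₁' →ₗ[F2] C₁') (d₂ g : C₂ →ₗ[F2] C₂)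
    (A B H : C₁ →ₗ[F2] C₁') (hAB : A + B = d₁' ∘ₗ H + H ∘ₗ d₁)
    (hg : d₂ ∘ₗ g = g ∘ₗ d₂) :
    tD d₁' d₂ ∘ₗ TensorProduct.map H g + TensorProduct.map H g ∘ₗ tD d₁ d₂
      = TensorProduct.map A g + TensorProduct.map B g := by
  simp only [tD, LinearMap.add_comp, LinearMap.comp_add,
    ← TensorProduct.map_comp, LinearMap.comp_id, LinearMap.id_comp]
  rw [show TensorProduct.map A g + TensorProduct.map B g
      = TensorProduct.map (A + B) g by rw [TensorProduct.map_add_left], hAB,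
    TensorProduct.map_add_left, hg]
  calc TensorProduct.map (d₁' ∘ₗ H) g + TensorProduct.map H (g ∘ₗ d₂)
        + (TensorProduct.map (H ∘ₗ d₁) g + TensorProduct.map H (g ∘ₗ d₂))
      = TensorProduct.map (d₁' ∘ₗ H) g
        + (TensorProduct.map H (g ∘ₗ d₂) + TensorProduct.map H (g ∘ₗ d₂))
        + TensorProduct.map (H ∘ₗ d₁) g := by abel
    _ = _ := by rw [char2_addself, add_zero]

/-- if `F : C₁ → C₁'` is a chain map with `F∘ι₁ ≃ ι₁'∘F` and
`F∘Φ₁ ≃ Φ₁'∘F` (all maps being chain maps), then `F⊗id` intertwines the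
product involutions up to chain homotopy:
`(F⊗id)∘(ι₁⊗ι₂ + Φ₁ι₁⊗Ψ₂ι₂) ≃ (ι₁'⊗ι₂ + Φ₁'ι₁'⊗Ψ₂ι₂)∘(F⊗id)`. -/
theorem stmt17 {C₁ C₁' C₂ : Type} [AddCommGroup C₁] [Module F2 C₁]
    [AddCommGroup C₁'] [Module F2 C₁'] [AddCommGroup C₂] [Module F2 C₂]
    (d₁ ι₁ Φ₁ Ψ₁ : C₁ →ₗ[F2] C₁) (d₁' ι₁' Φ₁' Ψ₁' : C₁' →ₗ[F2] C₁')
    (d₂ ι₂ Φ₂ Ψ₂ : C₂ →ₗ[F2] C₂)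
    (hd₁ : d₁ ∘ₗ d₁ = 0) (hd₁' : d₁' ∘ₗ d₁' = 0) (hd₂ : d₂ ∘ₗ d₂ = 0)
    (hι₁ : d₁ ∘ₗ ι₁ = ι₁ ∘ₗ d₁) (hΦ₁ : d₁ ∘ₗ Φ₁ = Φ₁ ∘ₗ d₁) (hΨ₁ : d₁ ∘ₗ Ψ₁ = Ψ₁ ∘ₗ d₁)
    (hι₁' : d₁' ∘ₗ ι₁' = ι₁' ∘ₗ d₁') (hΦ₁' : d₁' ∘ₗ Φ₁' = Φ₁' ∘ₗ d₁')
    (hΨ₁' : d₁' ∘ₗ Ψ₁' = Ψ₁' ∘ₗ d₁')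
    (hι₂ : d₂ ∘ₗ ι₂ = ι₂ ∘ₗ d₂) (hΦ₂ : d₂ ∘ₗ Φ₂ = Φ₂ ∘ₗ d₂) (hΨ₂ : d₂ ∘ₗ Ψ₂ = Ψ₂ ∘ₗ d₂)
    (F : C₁ →ₗ[F2] C₁') (hF : d₁' ∘ₗ F = F ∘ₗ d₁)
    (hFι : Htp2 d₁ d₁' (F ∘ₗ ι₁) (ι₁' ∘ₗ F))
    (hFΦ : Htp2 d₁ d₁' (F ∘ₗ Φ₁) (Φ₁' ∘ₗ F)) :
    Htp2 (tD d₁ d₂) (tD d₁' d₂)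
      (TensorProduct.map F LinearMap.id ∘ₗ
        (TensorProduct.map ι₁ ι₂ + TensorProduct.map (Φ₁ ∘ₗ ι₁) (Ψ₂ ∘ₗ ι₂)))
      ((TensorProduct.map ι₁' ι₂ + TensorProduct.map (Φ₁' ∘ₗ ι₁') (Ψ₂ ∘ₗ ι₂)) ∘ₗ
        TensorProduct.map F LinearMap.id) := by
  obtain ⟨Hι, hHι⟩ := hFι
  obtain ⟨HΦ, hHΦ⟩ := hFΦ
  refine ⟨TensorProduct.map Hι ι₂
    + TensorProduct.map (HΦ ∘ₗ ι₁ + Φ₁' ∘ₗ Hι) (Ψ₂ ∘ₗ ι₂), ?_⟩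
  have e2 : (F ∘ₗ Φ₁ ∘ₗ ι₁) + (Φ₁' ∘ₗ ι₁' ∘ₗ F)
      = d₁' ∘ₗ (HΦ ∘ₗ ι₁ + Φ₁' ∘ₗ Hι) + (HΦ ∘ₗ ι₁ + Φ₁' ∘ₗ Hι) ∘ₗ d₁ := by
    have h1 : (F ∘ₗ Φ₁ + Φ₁' ∘ₗ F) ∘ₗ ι₁ = (d₁' ∘ₗ HΦ + HΦ ∘ₗ d₁) ∘ₗ ι₁ := by
      rw [hHΦ]
    have h2 : Φ₁' ∘ₗ (F ∘ₗ ι₁ + ι₁' ∘ₗ F) = Φ₁' ∘ₗ (d₁' ∘ₗ Hι + Hι ∘ₗ d₁) := by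
      rw [hHι]
    simp only [LinearMap.add_comp, LinearMap.comp_add, LinearMap.comp_assoc]
      at h1 h2 ⊢
    rw [hι₁] at h1
    rw [show Φ₁' ∘ₗ d₁' ∘ₗ Hι = d₁' ∘ₗ Φ₁' ∘ₗ Hι by
      rw [← LinearMap.comp_assoc, ← hΦ₁', LinearMap.comp_assoc]] at h2
    calc F ∘ₗ Φ₁ ∘ₗ ι₁ + Φ₁' ∘ₗ ι₁' ∘ₗ F
        = (F ∘ₗ Φ₁ ∘ₗ ι₁ + Φ₁' ∘ₗ F ∘ₗ ι₁)
          + (Φ₁' ∘ₗ F ∘ₗ ι₁ + Φ₁' ∘ₗ ι₁' ∘ₗ F) := (cancel_middle _ _ _).symm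
      _ = _ := by rw [h1, h2]; abel
  have k1 := key_htp d₁ d₁' d₂ ι₂ (F ∘ₗ ι₁) (ι₁' ∘ₗ F) Hι hHι hι₂
  have k2 := key_htp d₁ d₁' d₂ (Ψ₂ ∘ₗ ι₂) (F ∘ₗ Φ₁ ∘ₗ ι₁) (Φ₁' ∘ₗ ι₁' ∘ₗ F)
      (HΦ ∘ₗ ι₁ + Φ₁' ∘ₗ Hι) e2
      (by rw [← LinearMap.comp_assoc, hΨ₂, LinearMap.comp_assoc, hι₂,
        LinearMap.comp_assoc])
  rw [LinearMap.comp_add, LinearMap.add_comp, LinearMap.comp_add,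
    LinearMap.add_comp]
  simp only [← TensorProduct.map_comp, LinearMap.comp_id, LinearMap.id_comp,
    LinearMap.comp_assoc] at k1 k2 ⊢
  calc _ = (TensorProduct.map (F ∘ₗ ι₁) ι₂ + TensorProduct.map (ι₁' ∘ₗ F) ι₂)
        + (TensorProduct.map (F ∘ₗ Φ₁ ∘ₗ ι₁) (Ψ₂ ∘ₗ ι₂)
          + TensorProduct.map (Φ₁' ∘ₗ ι₁' ∘ₗ F) (Ψ₂ ∘ₗ ι₂)) := by abel
    _ = _ := by rw [← k1, ← k2]; abel

end
end
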